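/- Let φ : ℝ^n → ℝ be twice continuously differentiable and convex. Then det(∇²φ(x)) = 0 for all x ∈ ℝ^n if and only if there exist a nonzero vector v ∈ ℝ^n and a constant c ∈ ℝ such that ⟨v, ∇φ(x)⟩ = c for all x ∈ ℝ^n (i.e., φ has a direction of linearity). -/

import Mathlib

open RealInnerProductSpace

/-- The Hessian matrix of a function `φ : ℝⁿ → ℝ` at a point `x`,
whose `(i,j)` entry is the second partial derivative `∂²φ/∂xᵢ∂xⱼ (x)`. -/
noncomputable def hess {n : ℕ} (φ : EuclideanSpace ℝ (Fin n) → ℝ)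
    (x : EuclideanSpace ℝ (Fin n)) : Matrix (Fin n) (Fin n) ℝ :=
  Matrix.of fun i j =>
    fderiv ℝ (fun y => fderiv ℝ φ y (EuclideanSpace.single j 1)) x (EuclideanSpace.single i 1)

open Matrix

variable {n : ℕ}

local notation "E" => EuclideanSpace ℝ (Fin n)

lemma inner_gradient_eq (φ : E → ℝ) (x w : E) :
    ⟪gradient φ x, w⟫ = fderiv ℝ φ x w :=
  InnerProductSpace.toDual_symm_apply

lemma convex_grad_ineq (φ : E → ℝ) (hconv : ConvexOn ℝ Set.univ φ)
    (hdiff : Differentiable ℝ φ) (z x : E) :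
    φ z + ⟪gradient φ z, x - z⟫ ≤ φ x := by
  have hline : ∀ t : ℝ, HasDerivAt (fun t : ℝ => φ (t • (x - z) + z))
      (fderiv ℝ φ (t • (x - z) + z) (x - z)) t := by
    intro t
    have h1 : HasDerivAt (fun t : ℝ => t • (x - z) + z) (x - z) t := by
      simpa using ((hasDerivAt_id t).smul_const (x - z)).add_const z
    exact (hdiff _).hasFDerivAt.comp_hasDerivAt t h1
  have hFc : ConvexOn ℝ Set.univ (fun t : ℝ => φ (t • (x - z) + z)) := by
    have h := hconv.comp_affineMap (AffineMap.lineMap z x)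
    have he : (φ ∘ ⇑(AffineMap.lineMap z x)) = fun t : ℝ => φ (t • (x - z) + z) := by
      funext t
      simp only [Function.comp_apply, AffineMap.lineMap_apply_module]
      have harg : (1 - t) • z + t • x = t • (x - z) + z := by module
      rw [harg]
    simpa [he] using h
  have hs := hFc.le_slope_of_hasDerivAt (Set.mem_univ (0:ℝ)) (Set.mem_univ (1:ℝ))
    one_pos (hline 0)
  have h0 : ((0:ℝ) • (x - z) + z) = z := by simp
  have h1 : ((1:ℝ) • (x - z) + z) = x := by simp
  rw [slope_def_field] at hs
  simp only [h0, h1] at hs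
  have := inner_gradient_eq φ z (x - z)
  rw [this]
  have hm : (fderiv ℝ φ z) (x - z) = (fderiv ℝ φ z) x - (fderiv ℝ φ z) z :=
    map_sub _ _ _
  field_simp at hs
  linarith

lemma contDiff_fderiv_one (φ : E → ℝ) (hsmooth : ContDiff ℝ 2 φ) :
    ContDiff ℝ 1 (fderiv ℝ φ) :=
  hsmooth.fderiv_right (le_refl 2)

lemma fderiv_fderiv_apply (φ : E → ℝ) (hsmooth : ContDiff ℝ 2 φ) (x w v : E) :
    fderiv ℝ (fun y => fderiv ℝ φ y w) x v = (fderiv ℝ (fderiv ℝ φ) x v) w := by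
  have hΨ : Differentiable ℝ (fderiv ℝ φ) :=
    (contDiff_fderiv_one φ hsmooth).differentiable one_ne_zero
  have h := (hΨ x).hasFDerivAt.clm_apply (hasFDerivAt_const w x)
  rw [h.fderiv]
  simp

lemma sum_single_eq (v : E) :
    ∑ j : Fin n, v j • EuclideanSpace.single j (1:ℝ) = v := by
  have h := (EuclideanSpace.basisFun (Fin n) ℝ).sum_repr v
  simpa [EuclideanSpace.basisFun_repr, EuclideanSpace.basisFun_apply] using h

lemma rev_dir (φ : E → ℝ) (hsmooth : ContDiff ℝ 2 φ)
    (v : E) (hv : v ≠ 0) (c : ℝ) (hc : ∀ x, ⟪v, gradient φ x⟫ = c) (x : E) :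
    (hess φ x).det = 0 := by
  rw [← Matrix.exists_mulVec_eq_zero_iff]
  refine ⟨(fun j => v j), ?_, ?_⟩
  · intro h0
    apply hv
    ext j
    exact congrFun h0 j
  · have hconst : (fun y => fderiv ℝ φ y v) = fun _ => c := by
      funext y
      rw [← inner_gradient_eq, real_inner_comm]
      exact hc y
    funext i
    have hz : fderiv ℝ (fun y => fderiv ℝ φ y v) x (EuclideanSpace.single i 1) = 0 := by
      rw [hconst]
      simp
    rw [fderiv_fderiv_apply φ hsmooth] at hz
    have hsum : ∀ j : Fin n, hess φ x i j =
        (fderiv ℝ (fderiv ℝ φ) x (EuclideanSpace.single i 1)) (EuclideanSpace.single j 1) := by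
      intro j
      exact fderiv_fderiv_apply φ hsmooth x _ _
    have : (hess φ x *ᵥ (fun j => v j)) i
        = (fderiv ℝ (fderiv ℝ φ) x (EuclideanSpace.single i 1)) v := by
      rw [Matrix.mulVec, dotProduct]
      conv_rhs => rw [← sum_single_eq v, map_sum]
      refine Finset.sum_congr rfl fun j _ => ?_
      rw [hsum j, (fderiv ℝ (fderiv ℝ φ) x (EuclideanSpace.single i 1)).map_smul]
      simp [mul_comm]
    rw [Pi.zero_apply, this, hz]

lemma gradient_differentiable (φ : E → ℝ) (hsmooth : ContDiff ℝ 2 φ) :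
    Differentiable ℝ (gradient φ) := by
  have hΨ : Differentiable ℝ (fderiv ℝ φ) :=
    (contDiff_fderiv_one φ hsmooth).differentiable one_ne_zero
  exact fun x =>
    ((InnerProductSpace.toDual ℝ (EuclideanSpace ℝ (Fin n))).symm.differentiable.comp
      hΨ) x

lemma fderiv_gradient_apply (φ : E → ℝ) (hsmooth : ContDiff ℝ 2 φ) (x u : E) (i : Fin n) :
    (fderiv ℝ (gradient φ) x u) i
      = fderiv ℝ (fun y => fderiv ℝ φ y (EuclideanSpace.single i 1)) x u := by
  have hgdiff := gradient_differentiable φ hsmooth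
  have hP : HasFDerivAt (fun y => EuclideanSpace.proj (𝕜 := ℝ) i (gradient φ y))
      ((EuclideanSpace.proj (𝕜 := ℝ) i).comp (fderiv ℝ (gradient φ) x)) x :=
    (EuclideanSpace.proj (𝕜 := ℝ) i).hasFDerivAt.comp x (hgdiff x).hasFDerivAt
  have hfun : (fun y => EuclideanSpace.proj (𝕜 := ℝ) i (gradient φ y))
      = fun y => fderiv ℝ φ y (EuclideanSpace.single i 1) := by
    funext y
    have h1 := inner_gradient_eq φ y (EuclideanSpace.single i 1)
    have h2 : ⟪gradient φ y, EuclideanSpace.single i (1:ℝ)⟫ = gradient φ y i := by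
      rw [EuclideanSpace.inner_single_right]
      simp
    rw [← h1, h2]
    rfl
  rw [hfun] at hP
  rw [hP.fderiv]
  rfl

lemma det_fderiv_gradient (φ : E → ℝ) (hsmooth : ContDiff ℝ 2 φ) (x : E) :
    (fderiv ℝ (gradient φ) x).det = (hess φ x).det := by
  classical
  set b := (EuclideanSpace.basisFun (Fin n) ℝ).toBasis with hb
  have hM : LinearMap.toMatrix b b
      ((fderiv ℝ (gradient φ) x : E →L[ℝ] E) : E →ₗ[ℝ] E) = (hess φ x)ᵀ := by
    ext i j
    rw [LinearMap.toMatrix_apply, Matrix.transpose_apply]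
    have hbj : b j = EuclideanSpace.single j 1 := by
      rw [hb, OrthonormalBasis.coe_toBasis, EuclideanSpace.basisFun_apply]
    have hrepr : ∀ w : E, b.repr w i = w i := fun w => by
      rw [hb, OrthonormalBasis.coe_toBasis_repr_apply, EuclideanSpace.basisFun_repr]
    rw [hbj, hrepr]
    exact fderiv_gradient_apply φ hsmooth x _ i
  have : (fderiv ℝ (gradient φ) x).det
      = (LinearMap.toMatrix b b ((fderiv ℝ (gradient φ) x : E →L[ℝ] E) : E →ₗ[ℝ] E)).det :=
    (LinearMap.det_toMatrix b _).symm
  rw [this, hM, Matrix.det_transpose]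

lemma exists_gradient_eq (φ : E → ℝ) (hconv : ConvexOn ℝ Set.univ φ)
    (hdiff : Differentiable ℝ φ) (V : Set E) (hVfin : V.Finite)
    (hV : ∀ p ∈ V, ∃ z : E, gradient φ z = p) (y : E) (ε : ℝ) (hε : 0 < ε)
    (hball : Metric.ball y ε ⊆ convexHull ℝ V) : ∃ x : E, gradient φ x = y := by
  classical
  have hVne : V.Nonempty := by
    by_contra h
    rw [Set.not_nonempty_iff_eq_empty] at h
    have := hball (Metric.mem_ball_self hε)
    rw [h, convexHull_empty] at this
    exact this
  choose! z hz using hV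
  set t : Finset E := hVfin.toFinset with ht
  have hte : t.Nonempty := by
    rwa [ht, Set.Finite.toFinset_nonempty]
  set C : ℝ := t.inf' hte (fun p => φ (z p) - ⟪p, z p⟫) with hC
  set ψ : E → ℝ := fun x => φ x - ⟪y, x⟫ with hψ
  have hCle : ∀ p ∈ V, C ≤ φ (z p) - ⟪p, z p⟫ := by
    intro p hp
    exact Finset.inf'_le _ (by rwa [ht, Set.Finite.mem_toFinset])
  have hgradineq : ∀ p ∈ V, ∀ w : E, φ (z p) + ⟪p, w - z p⟫ ≤ φ w := by
    intro p hp w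
    have := convex_grad_ineq φ hconv hdiff (z p) w
    rwa [hz p hp] at this
  have hcoer : ∀ x : E, C + ε / 2 * ‖x‖ ≤ ψ x := by
    intro x
    rcases eq_or_ne x 0 with rfl | hx0
    · obtain ⟨p, hp⟩ := hVne
      have h1 := hCle p hp
      have h2 := hgradineq p hp 0
      rw [zero_sub, inner_neg_right] at h2
      simp only [hψ, norm_zero, inner_zero_right]
      linarith
    · set u : E := ‖x‖⁻¹ • x with hu
      have hxnorm : (0:ℝ) < ‖x‖ := norm_pos_iff.mpr hx0
      have hunorm : ‖u‖ = 1 := by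
        rw [hu, norm_smul, norm_inv, norm_norm, inv_mul_cancel₀ (ne_of_gt hxnorm)]
      have hq : y + (ε/2) • u ∈ convexHull ℝ V := by
        apply hball
        rw [Metric.mem_ball, dist_eq_norm]
        simp only [add_sub_cancel_left]
        rw [norm_smul, hunorm]
        rw [Real.norm_eq_abs, abs_of_pos (by linarith)]
        linarith
      set M : ℝ := t.sup' hte (fun p => ⟪p, x⟫) with hM
      have hhalf : convexHull ℝ V ⊆ {w : E | ⟪w, x⟫ ≤ M} := by
        apply convexHull_min
        · intro p hp
          exact Finset.le_sup' (fun p => (⟪p, x⟫ : ℝ)) (hVfin.mem_toFinset.mpr hp)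
        · exact convex_halfSpace_le
            ⟨fun a b => inner_add_left a b x, fun c a => real_inner_smul_left a x c⟩ M
      obtain ⟨p₀, hp₀t, hMp₀⟩ := Finset.exists_mem_eq_sup' hte (fun p => ⟪p, x⟫)
      have hp₀V : p₀ ∈ V := by rwa [ht, Set.Finite.mem_toFinset] at hp₀t
      have hqM : ⟪y + (ε/2) • u, x⟫ ≤ M := hhalf hq
      have hqinner : ⟪y + (ε/2) • u, x⟫ = ⟪y, x⟫ + ε / 2 * ‖x‖ := by
        rw [inner_add_left, real_inner_smul_left, hu, real_inner_smul_left,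
          real_inner_self_eq_norm_sq]
        field_simp
      have h1 := hCle p₀ hp₀V
      have h2 := hgradineq p₀ hp₀V x
      rw [inner_sub_right] at h2
      have h3 : ⟪y, x⟫ + ε / 2 * ‖x‖ ≤ ⟪p₀, x⟫ := by
        rw [← hMp₀, ← hqinner]; exact hqM
      simp only [hψ]
      linarith
  have hψc : Continuous ψ := by
    apply hdiff.continuous.sub
    exact Continuous.inner continuous_const continuous_id
  have hψder : ∀ w : E, HasFDerivAt ψ (fderiv ℝ φ w - innerSL ℝ y) w := fun w =>
    (hdiff w).hasFDerivAt.sub ((innerSL ℝ y).hasFDerivAt)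
  clear_value C ψ
  set R : ℝ := max 1 ((ψ 0 - C + 1) * (2 / ε)) with hR
  have hR1 : (1:ℝ) ≤ R := le_max_left _ _
  have hR0 : (0:ℝ) < R := lt_of_lt_of_le one_pos hR1
  obtain ⟨x₀, hx₀mem, hx₀min⟩ := (isCompact_closedBall (0:E) R).exists_isMinOn
    ⟨0, Metric.mem_closedBall_self (le_of_lt hR0)⟩ hψc.continuousOn
  have hψx₀ : ψ x₀ ≤ ψ 0 := hx₀min (Metric.mem_closedBall_self (le_of_lt hR0))
  have hlt : ‖x₀‖ < R := by
    by_contra h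
    have hx₀R : ‖x₀‖ = R := by
      exact le_antisymm (mem_closedBall_zero_iff.mp hx₀mem) (not_lt.mp h)
    have h1 := hcoer x₀
    have h2 : (ψ 0 - C + 1) * (2 / ε) ≤ R := le_max_right _ _
    have h3 : ε / 2 * ((ψ 0 - C + 1) * (2 / ε)) ≤ ε / 2 * R :=
      mul_le_mul_of_nonneg_left h2 (by linarith)
    have h4 : ε / 2 * ((ψ 0 - C + 1) * (2 / ε)) = ψ 0 - C + 1 := by
      field_simp
    rw [hx₀R] at h1
    have h5 : ψ 0 - C + 1 ≤ ε / 2 * R := by rw [← h4]; exact h3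
    linarith [h1, hψx₀, h5]
  have hlocal : IsLocalMin ψ x₀ := by
    apply hx₀min.isLocalMin
    apply Filter.mem_of_superset (Metric.isOpen_ball.mem_nhds (mem_ball_zero_iff.mpr hlt))
    exact Metric.ball_subset_closedBall
  have hfd : fderiv ℝ ψ x₀ = 0 := hlocal.fderiv_eq_zero
  have hsub : HasFDerivAt ψ (fderiv ℝ φ x₀ - innerSL ℝ y) x₀ := hψder x₀
  have heq : fderiv ℝ φ x₀ = innerSL ℝ y := by
    have := hsub.fderiv
    rw [hfd] at this
    exact (sub_eq_zero.mp this.symm)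
  refine ⟨x₀, ?_⟩
  apply ext_inner_right ℝ
  intro w
  rw [inner_gradient_eq, heq]
  rfl

/-- For a twice continuously differentiable convex function, the Hessian
determinant vanishes identically if and only if the function has a (global)
direction of linearity. -/
theorem convex_hessian_det_zero_iff_direction_of_linearity {n : ℕ}
    (φ : EuclideanSpace ℝ (Fin n) → ℝ)
    (hsmooth : ContDiff ℝ 2 φ) (hconv : ConvexOn ℝ Set.univ φ) :
    (∀ x, (hess φ x).det = 0) ↔
      ∃ v : EuclideanSpace ℝ (Fin n), v ≠ 0 ∧ ∃ c : ℝ, ∀ x, ⟪v, gradient φ x⟫ = c := by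
  constructor
  · intro hdet
    have hdiff : Differentiable ℝ φ := hsmooth.differentiable two_ne_zero
    set g := gradient φ with hg
    have hgdiff : Differentiable ℝ g := gradient_differentiable φ hsmooth
    have himg : MeasureTheory.volume (g '' Set.univ) = 0 := by
      apply MeasureTheory.addHaar_image_eq_zero_of_det_fderivWithin_eq_zero
        MeasureTheory.volume
        (f' := fun x => fderiv ℝ g x)
        (fun x _ => (hgdiff x).hasFDerivAt.hasFDerivWithinAt)
      intro x _
      rw [det_fderiv_gradient φ hsmooth x]
      exact hdet x
    set S : Submodule ℝ (EuclideanSpace ℝ (Fin n)) :=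
      Submodule.span ℝ (Set.range (fun x => g x - g 0)) with hS
    by_cases hStop : S = ⊤
    · exfalso
      obtain ⟨bs, hbsub, hbspan, hbind⟩ :=
        exists_linearIndependent ℝ (Set.range (fun x => g x - g 0))
      rw [← hS, hStop] at hbspan
      have hbfin : bs.Finite := hbind.setFinite
      set V : Set (EuclideanSpace ℝ (Fin n)) :=
        insert (g 0) ((fun u => g 0 + u) '' bs) with hV
      have hVfin : V.Finite := ((hbfin.image _).insert _)
      have hVsub : ∀ p ∈ V, ∃ x, g x = p := by
        rintro p (rfl | ⟨u, hu, rfl⟩)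
        · exact ⟨0, rfl⟩
        · obtain ⟨x, hx⟩ := hbsub hu
          refine ⟨x, ?_⟩
          have hx' : gradient φ x - gradient φ 0 = u := hx
          show gradient φ x = gradient φ 0 + u
          rw [← hx']
          abel
      have hvs : vectorSpan ℝ V = ⊤ := by
        rw [eq_top_iff, ← hbspan, Submodule.span_le]
        intro u hu
        have h1 : (g 0 + u) ∈ V := Set.mem_insert_of_mem _ ⟨u, hu, rfl⟩
        have h2 : g 0 ∈ V := Set.mem_insert _ _
        have h3 := vsub_mem_vectorSpan ℝ h1 h2
        simpa using h3
      have haff : affineSpan ℝ V = ⊤ :=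
        (AffineSubspace.affineSpan_eq_top_iff_vectorSpan_eq_top_of_nonempty ℝ _ _
          ⟨g 0, Set.mem_insert _ _⟩).mpr hvs
      have hKint : (interior (convexHull ℝ V)).Nonempty := by
        rw [interior_convexHull_nonempty_iff_affineSpan_eq_top]
        exact haff
      obtain ⟨y₀, hy₀⟩ := hKint
      obtain ⟨ε, hε, hball⟩ := Metric.isOpen_iff.mp isOpen_interior y₀ hy₀
      have hsubrange : Metric.ball y₀ (ε/2) ⊆ Set.range g := by
        intro y hy
        have hsub2 : Metric.ball y (ε/2) ⊆ convexHull ℝ V := by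
          intro w hw
          apply interior_subset
          apply hball
          rw [Metric.mem_ball] at *
          calc dist w y₀ ≤ dist w y + dist y y₀ := dist_triangle _ _ _
            _ < ε/2 + ε/2 := add_lt_add hw hy
            _ = ε := by ring
        obtain ⟨x, hx⟩ := exists_gradient_eq φ hconv hdiff V hVfin hVsub y (ε/2)
          (by linarith) hsub2
        exact ⟨x, hx⟩
      have h1 : MeasureTheory.volume (Metric.ball y₀ (ε/2)) = 0 := by
        apply le_antisymm _ (zero_le)
        rw [← himg, Set.image_univ]
        exact MeasureTheory.measure_mono hsubrange
      have h2 := Metric.measure_ball_pos MeasureTheory.volume y₀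
        (by linarith : (0:ℝ) < ε/2)
      rw [h1] at h2
      exact lt_irrefl _ h2
    · have hSneq : Sᗮ ≠ ⊥ := by
        rwa [ne_eq, Submodule.orthogonal_eq_bot_iff]
      obtain ⟨v, hvS, hv0⟩ := Submodule.exists_mem_ne_zero_of_ne_bot hSneq
      refine ⟨v, hv0, ⟪v, g 0⟫, fun x => ?_⟩
      have hmem : g x - g 0 ∈ S := Submodule.subset_span ⟨x, rfl⟩
      have horth : ⟪g x - g 0, v⟫ = 0 := (Submodule.mem_orthogonal S v).mp hvS _ hmem
      rw [real_inner_comm] at horth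
      have : ⟪v, g x⟫ - ⟪v, g 0⟫ = 0 := by rw [← inner_sub_right]; exact horth
      linarith
  · rintro ⟨v, hv, c, hc⟩
    exact fun x => rev_dir φ hsmooth v hv c hc x
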